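/- Let $L(X) = X + X^2 + X^8$ over $\mathbb{F}_2$ and let $n$ be a positive integer with $7 \mid n$. Then the set of roots of $L$ in $\mathbb{F}_{2^n}$ equals $\{x + x^2 + x^4 + x^{16} : x \in \mathbb{F}_{2^7}\}$, and in particular $L$ has exactly $8$ roots in $\mathbb{F}_{2^n}$. -/

import Mathlib

open Polynomial Finset

theorem aux18 (K : Type*) [Field K] [Fintype K] [CharP K 2]
    (hcard : (127 : ℕ) ∣ Fintype.card K - 1) :
    {x : K | x + x ^ 2 + x ^ 8 = 0} =
        (fun y : K => y + y ^ 2 + y ^ 4 + y ^ 16) '' {y : K | y ^ 2 ^ 7 = y} ∧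
      {x : K | x + x ^ 2 + x ^ 8 = 0}.ncard = 8 := by
  classical
  set T : K → K := fun y => y + y ^ 2 + y ^ 4 + y ^ 16 with hT
  have sq : ∀ a b : K, (a + b) ^ 2 = a ^ 2 + b ^ 2 := fun a b => CharTwo.add_sq a b
  have h2 : (2 : K) = 0 := CharTwo.two_eq_zero
  -- T is additive
  have hTadd : ∀ a b : K, T (a + b) = T a + T b := by
    intro a b
    show (a+b) + (a+b)^2 + (a+b)^4 + (a+b)^16 = _
    have e4 : (a+b) ^ 4 = ((a+b)^2)^2 := by ring
    have e16 : (a+b) ^ 16 = ((((a+b)^2)^2)^2)^2 := by ring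
    rw [e4, e16]
    simp only [sq, ← pow_mul]
    norm_num
    ring
  -- image lands in root set
  have hTS : ∀ y : K, y ^ 2 ^ 7 = y → T y + (T y) ^ 2 + (T y) ^ 8 = 0 := by
    intro y h
    have h128 : y ^ 128 = y := by norm_num at h; exact h
    show (y + y^2 + y^4 + y^16) + (y + y^2 + y^4 + y^16)^2 + (y + y^2 + y^4 + y^16)^8 = 0
    have e8 : (y + y^2 + y^4 + y^16) ^ 8 = (((y + y^2 + y^4 + y^16) ^ 2) ^ 2) ^ 2 := by ring
    rw [e8]
    simp only [sq, ← pow_mul]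
    norm_num
    rw [h128]
    linear_combination (y + y^2 + y^4 + y^8 + y^16 + y^32) * h2
  set Sf : Finset K := univ.filter (fun x => x + x ^ 2 + x ^ 8 = 0) with hSf
  set Df : Finset K := univ.filter (fun y => y ^ 2 ^ 7 = y) with hDf
  set Kf : Finset K := univ.filter (fun y => T y = 0) with hKf
  set If : Finset K := Df.image T with hIf
  have hIS : If ⊆ Sf := by
    intro x hx
    simp only [hIf, hSf, mem_image, mem_filter, mem_univ, true_and] at hx ⊢
    obtain ⟨y, hy, rfl⟩ := hx
    simp only [hDf, mem_filter, mem_univ, true_and] at hy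
    exact hTS y hy
  -- card of Sf ≤ 8
  have root_bound : ∀ (p : K[X]) (f : Finset K), p ≠ 0 → (∀ x ∈ f, p.IsRoot x) →
      f.card ≤ p.natDegree := by
    intro p f hp hf
    have h1 : f ⊆ p.roots.toFinset := by
      intro x hx
      rw [Multiset.mem_toFinset, mem_roots hp]
      exact hf x hx
    calc f.card ≤ p.roots.toFinset.card := Finset.card_le_card h1
      _ ≤ Multiset.card p.roots := Multiset.toFinset_card_le _
      _ ≤ p.natDegree := p.card_roots'
  have hScard : Sf.card ≤ 8 := by
    have hp : (X ^ 8 + X ^ 2 + X : K[X]) ≠ 0 := by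
      intro h
      have := congrArg (fun q => Polynomial.coeff q 1) h
      simp at this
    have hd : (X ^ 8 + X ^ 2 + X : K[X]).natDegree = 8 := by compute_degree!
    have := root_bound (X ^ 8 + X ^ 2 + X) Sf hp (by
      intro x hx
      simp only [hSf, mem_filter] at hx
      simp only [IsRoot, eval_add, eval_pow, eval_X]
      linear_combination hx.2)
    omega
  have hKcard : Kf.card ≤ 16 := by
    have hp : (X ^ 16 + X ^ 4 + X ^ 2 + X : K[X]) ≠ 0 := by
      intro h
      have := congrArg (fun q => Polynomial.coeff q 1) h
      simp at this
    have hd : (X ^ 16 + X ^ 4 + X ^ 2 + X : K[X]).natDegree = 16 := by compute_degree!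
    have := root_bound (X ^ 16 + X ^ 4 + X ^ 2 + X) Kf hp (by
      intro x hx
      simp only [hKf, mem_filter] at hx
      have := hx.2
      simp only [hT] at this
      simp only [IsRoot, eval_add, eval_pow, eval_X]
      linear_combination this)
    omega
  -- card of Df = 128
  have hDcard : Df.card = 128 := by
    have h127 : Nat.Prime 127 := by norm_num
    haveI : Fact (Nat.Prime 127) := ⟨h127⟩
    have hdvd : (127 : ℕ) ∣ Fintype.card Kˣ := by
      rw [Fintype.card_units]; exact hcard
    obtain ⟨u, hu⟩ := exists_prime_orderOf_dvd_card 127 hdvd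
    have hprim : IsPrimitiveRoot (u : K) 127 := by
      have := IsPrimitiveRoot.orderOf (u : K)
      rwa [orderOf_units, hu] at this
    have hDeq : Df = insert (0 : K) (Polynomial.nthRootsFinset 127 (1 : K)) := by
      ext z
      simp only [hDf, mem_filter, mem_univ, true_and, Finset.mem_insert,
        Polynomial.mem_nthRootsFinset (by norm_num : 0 < 127) (1 : K)]
      constructor
      · intro h
        rcases eq_or_ne z 0 with rfl | hz
        · exact Or.inl rfl
        · right
          have : z ^ 127 * z = 1 * z := by
            rw [one_mul, ← pow_succ]
            norm_num at h ⊢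
            exact h
          exact mul_right_cancel₀ hz this
      · rintro (rfl | h)
        · simp
        · have : z ^ 128 = z := by
            have : z ^ 127 * z = z := by rw [h, one_mul]
            rw [← pow_succ] at this
            norm_num at this ⊢
            exact this
          norm_num
          exact this
    rw [hDeq, Finset.card_insert_of_notMem, hprim.card_nthRootsFinset]
    intro h
    rw [Polynomial.mem_nthRootsFinset (by norm_num : 0 < 127) (1 : K)] at h
    simp at h
  -- fibers small
  have hfiber : ∀ c ∈ If, (Df.filter (fun y => T y = c)).card ≤ 16 := by
    intro c hc
    simp only [hIf, mem_image] at hc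
    obtain ⟨y₀, hy₀, hTy₀⟩ := hc
    have hmap : (Df.filter (fun y => T y = c)).card ≤ Kf.card := by
      apply Finset.card_le_card_of_injOn (fun y => y + y₀)
      · intro y hy
        simp only [Finset.mem_coe, mem_filter] at hy
        simp only [Finset.mem_coe, hKf, mem_filter, mem_univ, true_and]
        rw [hTadd, hy.2, hTy₀, CharTwo.add_self_eq_zero]
      · intro a _ b _ h
        exact add_left_injective y₀ h
    omega
  have hcover : Df ⊆ If.biUnion (fun c => Df.filter (fun y => T y = c)) := by
    intro y hy
    rw [Finset.mem_biUnion]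
    exact ⟨T y, Finset.mem_image_of_mem T hy, by simp [hy]⟩
  have hIcard : 8 ≤ If.card := by
    have h1 : Df.card ≤ If.card * 16 :=
      le_trans (Finset.card_le_card hcover) (Finset.card_biUnion_le_card_mul _ _ _ hfiber)
    omega
  have hle : If.card ≤ Sf.card := Finset.card_le_card hIS
  have hEq : If = Sf := Finset.eq_of_subset_of_card_le hIS (by omega)
  have hScoe : {x : K | x + x ^ 2 + x ^ 8 = 0} = ↑Sf := by
    ext x; simp [hSf]
  have hDcoe : {y : K | y ^ 2 ^ 7 = y} = ↑Df := by
    ext y; simp [hDf]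
  constructor
  · rw [hScoe, hDcoe, ← Finset.coe_image, ← hIf, hEq]
  · rw [hScoe, Set.ncard_coe_finset]
    omega

theorem stmt18 (n : ℕ) (hn : 0 < n) (h7 : 7 ∣ n) :
    {x : GaloisField 2 n | x + x ^ 2 + x ^ 8 = 0} =
        (fun y : GaloisField 2 n => y + y ^ 2 + y ^ 4 + y ^ 16) ''
          {y : GaloisField 2 n | y ^ 2 ^ 7 = y} ∧
      {x : GaloisField 2 n | x + x ^ 2 + x ^ 8 = 0}.ncard = 8 := by
  haveI : Fintype (GaloisField 2 n) := Fintype.ofFinite _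
  have hc : Fintype.card (GaloisField 2 n) = 2 ^ n := by
    rw [← Nat.card_eq_fintype_card]; exact GaloisField.card 2 n hn.ne'
  obtain ⟨k, rfl⟩ := h7
  have hdvd : (127 : ℕ) ∣ 2 ^ (7 * k) - 1 := by
    have h1 : (128 : ℕ) ^ k - 1 ^ k = 2 ^ (7 * k) - 1 := by
      rw [pow_mul]; norm_num
    have := Nat.sub_dvd_pow_sub_pow 128 1 k
    rw [h1] at this
    simpa using this
  exact aux18 _ (by rw [hc]; exact hdvd)
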